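/- Let Q be a real symmetric n×n matrix whose eigenvalues λ₁ ≥ λ₂ ≥ … ≥ λ_n satisfy λ_i ∈ [0, 1/2] for all i ≥ 2 and λ₁ < 1. Then for every integer ℓ ≥ 1, ‖Q(I-Q)^{-ℓ}‖_F² ≤ (1-λ₁)^{-2ℓ} + 4^ℓ · Tr(Q²). -/
import Mathlib

open Polynomial

section helpers

variable {m : Type*} [Fintype m] [DecidableEq m]

lemma myConjMul (U A B : Matrix m m ℝ) (h1 : star U * U = 1) :
    (U * A * star U) * (U * B * star U) = U * (A * B) * star U := by
  have h : star U * (U * (B * star U)) = B * star U := by rw [← mul_assoc, h1, one_mul]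
  simp only [mul_assoc, h]

lemma myConjPow (U A : Matrix m m ℝ) (h1 : star U * U = 1) (h2 : U * star U = 1) (k : ℕ) :
    (U * A * star U) ^ k = U * A ^ k * star U := by
  induction k with
  | zero => simp [h2]
  | succ k ih => rw [pow_succ, pow_succ, ih, myConjMul _ _ _ h1]

lemma myTraceConj (U A : Matrix m m ℝ) (h1 : star U * U = 1) :
    Matrix.trace (U * A * star U) = Matrix.trace A := by
  rw [Matrix.trace_mul_comm, ← mul_assoc, h1, one_mul]

lemma myCharpolyConj (U A : Matrix m m ℝ) (h1 : star U * U = 1) (h2 : U * star U = 1) :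
    (U * A * star U).charpoly = A.charpoly := by
  have hmm : Matrix.charmatrix (U * A * star U) =
      (C : ℝ →+* ℝ[X]).mapMatrix U * Matrix.charmatrix A * (C : ℝ →+* ℝ[X]).mapMatrix (star U) := by
    rw [Matrix.charmatrix, Matrix.charmatrix, mul_sub, sub_mul]
    simp only [map_mul]
    congr 1
    have hc : (C : ℝ →+* ℝ[X]).mapMatrix U * Matrix.scalar m (X : ℝ[X]) =
        Matrix.scalar m (X : ℝ[X]) * (C : ℝ →+* ℝ[X]).mapMatrix U :=
      (Matrix.scalar_commute (X : ℝ[X]) (fun r => mul_comm _ _) _).symm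
    rw [hc, mul_assoc, ← map_mul, h2, map_one, mul_one]
  rw [Matrix.charpoly, Matrix.charpoly, hmm, Matrix.det_mul, Matrix.det_mul]
  rw [mul_comm (((C : ℝ →+* ℝ[X]).mapMatrix U).det), mul_assoc, ← Matrix.det_mul,
    ← map_mul (C : ℝ →+* ℝ[X]).mapMatrix, h2, map_one, Matrix.det_one, mul_one]

lemma myCharpolyDiagonal (d : m → ℝ) :
    (Matrix.diagonal d).charpoly = ∏ i, (X - C (d i)) := by
  have hcm : Matrix.charmatrix (Matrix.diagonal d) =
      Matrix.diagonal (fun i => (X : ℝ[X]) - C (d i)) := by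
    ext i j
    by_cases h : i = j
    · subst h; simp
    · simp [Matrix.charmatrix_apply_ne _ _ _ h, Matrix.diagonal_apply_ne _ h]
  rw [Matrix.charpoly, hcm, Matrix.det_diagonal]

lemma myFrob (M : Matrix m m ℝ) : Matrix.trace (M * M.transpose) = ∑ i, ∑ j, (M i j) ^ 2 := by
  simp [Matrix.trace, Matrix.mul_apply, Matrix.diag, sq]

lemma myBound1 (x : ℝ) (hx : x < 1) (ℓ : ℕ) :
    (x * ((1 - x)⁻¹) ^ ℓ) ^ 2 ≤ ((1 - x) ^ (2 * ℓ))⁻¹ + 4 ^ ℓ * x ^ 2 := by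
  have h1x : (0 : ℝ) < 1 - x := by linarith
  have key : (x * ((1 - x)⁻¹) ^ ℓ) ^ 2 = x ^ 2 * ((1 - x) ^ (2 * ℓ))⁻¹ := by
    rw [mul_pow, ← pow_mul, ← inv_pow, mul_comm ℓ 2]
  rw [key]
  have hpos : (0 : ℝ) < ((1 - x) ^ (2 * ℓ))⁻¹ := by positivity
  rcases le_or_gt 0 x with h | h
  · have hx2 : x ^ 2 ≤ 1 := by nlinarith
    have h4 : (0 : ℝ) ≤ 4 ^ ℓ * x ^ 2 := by positivity
    nlinarith
  · have h1 : (1 : ℝ) ≤ 1 - x := by linarith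
    have hle : ((1 - x) ^ (2 * ℓ))⁻¹ ≤ 1 := by
      rw [inv_le_one_iff₀]; right; exact one_le_pow₀ h1
    have h41 : (1 : ℝ) ≤ 4 ^ ℓ := one_le_pow₀ (by norm_num)
    have hx2 : (0 : ℝ) ≤ x ^ 2 := sq_nonneg x
    nlinarith

lemma myBound2 (x : ℝ) (h0 : 0 ≤ x) (hx : x ≤ 1 / 2) (ℓ : ℕ) :
    (x * ((1 - x)⁻¹) ^ ℓ) ^ 2 ≤ 4 ^ ℓ * x ^ 2 := by
  have h1x : (0 : ℝ) < 1 - x := by linarith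
  have key : (x * ((1 - x)⁻¹) ^ ℓ) ^ 2 = x ^ 2 * ((1 - x) ^ (2 * ℓ))⁻¹ := by
    rw [mul_pow, ← pow_mul, ← inv_pow, mul_comm ℓ 2]
  rw [key]
  have h2 : ((1 : ℝ) / 2) ^ (2 * ℓ) ≤ (1 - x) ^ (2 * ℓ) :=
    pow_le_pow_left₀ (by norm_num) (by linarith) _
  have h3 : ((1 : ℝ) / 2) ^ (2 * ℓ) = ((4 : ℝ) ^ ℓ)⁻¹ := by
    rw [pow_mul, ← inv_pow]; norm_num
  have h4 : ((1 - x) ^ (2 * ℓ))⁻¹ ≤ 4 ^ ℓ := by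
    rw [← inv_inv ((4 : ℝ) ^ ℓ)]
    exact inv_anti₀ (by rw [← h3]; positivity) (h3 ▸ h2)
  calc x ^ 2 * ((1 - x) ^ (2 * ℓ))⁻¹ ≤ x ^ 2 * 4 ^ ℓ :=
        mul_le_mul_of_nonneg_left h4 (sq_nonneg x)
    _ = 4 ^ ℓ * x ^ 2 := mul_comm _ _

end helpers

/-- If `Q` is real symmetric with eigenvalues (in descending order) `λ₀ < 1` and
`λ_i ∈ [0, 1/2]` for `i ≥ 1`, then `‖Q(I-Q)^{-ℓ}‖_F² ≤ (1-λ₀)^{-2ℓ} + 4^ℓ Tr(Q²)`. -/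
theorem stmt8 {n : ℕ} (Q : Matrix (Fin (n + 1)) (Fin (n + 1)) ℝ) (hQ : Q.IsSymm)
    (lam : Fin (n + 1) → ℝ)
    (hchar : Matrix.charpoly Q = ∏ i, (X - C (lam i)))
    (hmono : Antitone lam)
    (h1 : lam 0 < 1)
    (h2 : ∀ i, i ≠ 0 → 0 ≤ lam i ∧ lam i ≤ 1 / 2)
    (ℓ : ℕ) (hℓ : 1 ≤ ℓ) :
    ∑ i, ∑ j, ((Q * ((1 - Q)⁻¹) ^ ℓ) i j) ^ 2 ≤
      ((1 - lam 0) ^ (2 * ℓ))⁻¹ + 4 ^ ℓ * Matrix.trace (Q * Q) := by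
  have hH : Q.IsHermitian := hQ
  set U : Matrix (Fin (n + 1)) (Fin (n + 1)) ℝ :=
    (Matrix.IsHermitian.eigenvectorUnitary hH : Matrix (Fin (n + 1)) (Fin (n + 1)) ℝ) with hUdef
  have h2U : U * star U = 1 :=
    Matrix.mem_unitaryGroup_iff.mp (Matrix.IsHermitian.eigenvectorUnitary hH).2
  have h1U : star U * U = 1 :=
    Matrix.mem_unitaryGroup_iff'.mp (Matrix.IsHermitian.eigenvectorUnitary hH).2
  set e := hH.eigenvalues with he
  have hspec : Q = U * Matrix.diagonal e * star U := by
    have h := hH.spectral_theorem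
    simpa using h
  have hcharE : Q.charpoly = ∏ i, (X - C (e i)) := by
    rw [hspec, myCharpolyConj _ _ h1U h2U, myCharpolyDiagonal]
  have hroots : Multiset.map e Finset.univ.val = Multiset.map lam Finset.univ.val := by
    have hprod : ∀ f : Fin (n + 1) → ℝ,
        (∏ i, (X - C (f i))) = ((Finset.univ.val.map f).map (fun a => X - C a)).prod := by
      intro f; rw [Multiset.map_map]; rfl
    have h := hcharE.symm.trans hchar
    rw [hprod e, hprod lam] at h
    have h' := congrArg Polynomial.roots h
    rwa [Polynomial.roots_multiset_prod_X_sub_C, Polynomial.roots_multiset_prod_X_sub_C] at h'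
  have hsum : ∀ g : ℝ → ℝ, ∑ i, g (e i) = ∑ i, g (lam i) := by
    intro g
    calc ∑ i, g (e i) = ((Finset.univ.val.map e).map g).sum := by rw [Multiset.map_map]; rfl
      _ = ((Finset.univ.val.map lam).map g).sum := by rw [hroots]
      _ = ∑ i, g (lam i) := by rw [Multiset.map_map]; rfl
  have hlt1 : ∀ i, e i < 1 := by
    intro i
    have hm : e i ∈ Multiset.map lam Finset.univ.val := by
      rw [← hroots]; exact Multiset.mem_map_of_mem _ (Finset.mem_univ i)
    obtain ⟨j, -, hj⟩ := Multiset.mem_map.mp hm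
    calc e i = lam j := hj.symm
      _ ≤ lam 0 := hmono (Fin.zero_le j)
      _ < 1 := h1
  have hw : ∀ i, (1 - e i) ≠ 0 := fun i => ne_of_gt (by have := hlt1 i; linarith)
  have hsub : 1 - Q = U * Matrix.diagonal (fun i => 1 - e i) * star U := by
    have hd : Matrix.diagonal (fun i => 1 - e i) = 1 - Matrix.diagonal e := by
      rw [← Matrix.diagonal_one, ← Matrix.diagonal_sub]
    rw [hd, mul_sub, sub_mul, mul_one, h2U, ← hspec]
  have hinv : (1 - Q)⁻¹ = U * Matrix.diagonal (fun i => (1 - e i)⁻¹) * star U := by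
    apply Matrix.inv_eq_left_inv
    rw [hsub, myConjMul _ _ _ h1U, Matrix.diagonal_mul_diagonal]
    have hd : (fun i => (1 - e i)⁻¹ * (1 - e i)) = fun _ => (1 : ℝ) :=
      funext fun i => inv_mul_cancel₀ (hw i)
    rw [hd, Matrix.diagonal_one, mul_one, h2U]
  have hM : Q * ((1 - Q)⁻¹) ^ ℓ =
      U * Matrix.diagonal (fun i => e i * ((1 - e i)⁻¹) ^ ℓ) * star U := by
    rw [hinv, myConjPow _ _ h1U h2U, hspec, myConjMul _ _ _ h1U, Matrix.diagonal_pow,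
      Matrix.diagonal_mul_diagonal]
    congr 1
  have hMT : (U * Matrix.diagonal (fun i => e i * ((1 - e i)⁻¹) ^ ℓ) * star U).transpose =
      U * Matrix.diagonal (fun i => e i * ((1 - e i)⁻¹) ^ ℓ) * star U := by
    have hsU : star U = U.transpose := by
      rw [Matrix.star_eq_conjTranspose, Matrix.conjTranspose_eq_transpose_of_trivial]
    rw [hsU, Matrix.transpose_mul, Matrix.transpose_mul, Matrix.transpose_transpose,
      Matrix.diagonal_transpose, ← mul_assoc]
  have key1 : ∑ i, ∑ j, ((Q * ((1 - Q)⁻¹) ^ ℓ) i j) ^ 2 =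
      ∑ i, (e i * ((1 - e i)⁻¹) ^ ℓ) ^ 2 := by
    rw [hM, ← myFrob, hMT, myConjMul _ _ _ h1U, Matrix.diagonal_mul_diagonal,
      myTraceConj _ _ h1U, Matrix.trace_diagonal]
    simp [sq]
  have key2 : Matrix.trace (Q * Q) = ∑ i, lam i ^ 2 := by
    rw [hspec, myConjMul _ _ _ h1U, Matrix.diagonal_mul_diagonal, myTraceConj _ _ h1U,
      Matrix.trace_diagonal, show (∑ i, e i * e i) = ∑ i, (fun x => x * x) (e i) from rfl,
      hsum (fun x => x * x)]
    exact Finset.sum_congr rfl fun i _ => (pow_two (lam i)).symm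
  rw [key1, key2,
    show (∑ i, (e i * ((1 - e i)⁻¹) ^ ℓ) ^ 2)
        = ∑ i, (fun x => (x * ((1 - x)⁻¹) ^ ℓ) ^ 2) (e i) from rfl,
    hsum (fun x => (x * ((1 - x)⁻¹) ^ ℓ) ^ 2)]
  rw [Fin.sum_univ_succ (f := fun i => (fun x => (x * ((1 - x)⁻¹) ^ ℓ) ^ 2) (lam i)),
    Fin.sum_univ_succ (f := fun i => lam i ^ 2), mul_add, Finset.mul_sum]
  have hb0 := myBound1 (lam 0) h1 ℓ
  have hbs : ∀ i : Fin n, ((lam i.succ * ((1 - lam i.succ)⁻¹) ^ ℓ) ^ 2) ≤ 4 ^ ℓ * lam i.succ ^ 2 :=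
    fun i => myBound2 _ (h2 _ (Fin.succ_ne_zero i)).1 (h2 _ (Fin.succ_ne_zero i)).2 ℓ
  have hsum2 := Finset.sum_le_sum (fun i (_ : i ∈ Finset.univ) => hbs i)
  dsimp only
  linarith [hsum2, hb0]
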